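/- Let m ≥ 1 and let α_1, …, α_m be complex numbers of modulus 1. Then limsup_{n → ∞} |α_1^n + α_2^n + ⋯ + α_m^n| ≥ √m. -/

import Mathlib

theorem stmt_7 (m : ℕ) (hm : 1 ≤ m) (α : Fin m → ℂ) (hα : ∀ i, ‖α i‖ = 1) :
    Real.sqrt m ≤
      Filter.limsup (fun n : ℕ => ‖∑ i, α i ^ n‖) Filter.atTop := by
  set S : ℕ → ℝ := fun n => ‖∑ i, α i ^ n‖ with hSdef
  have hS0 : ∀ n, 0 ≤ S n := fun n => norm_nonneg _
  have hSm : ∀ n, S n ≤ m := by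
    intro n
    calc ‖∑ i, α i ^ n‖ ≤ ∑ i, ‖α i ^ n‖ :=
          norm_sum_le _ _
      _ = m := by simp [norm_pow, hα]
  -- the pairwise products
  set β : Fin m → Fin m → ℂ := fun i j => α i * starRingEnd ℂ (α j) with hβdef
  have hβabs : ∀ i j, ‖β i j‖ = 1 := by
    intro i j
    simp [hβdef, norm_mul, hα]
  have hβdiag : ∀ i, β i i = 1 := by
    intro i
    have : Complex.normSq (α i) = 1 := by
      rw [← Complex.sq_norm, hα]; norm_num
    simp [hβdef, Complex.mul_conj, this]
  -- constants
  set c : Fin m → Fin m → ℝ := fun i j => 2 / ‖β i j - 1‖ with hcdef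
  have hc0 : ∀ i j, 0 ≤ c i j := by
    intro i j
    apply div_nonneg (by norm_num) (norm_nonneg _)
  have hcdiag : ∀ i, c i i = 0 := by
    intro i; simp [hcdef, hβdiag]
  set C : ℝ := ∑ i, ∑ j, c i j with hCdef
  have hC0 : 0 ≤ C := Finset.sum_nonneg fun i _ => Finset.sum_nonneg fun j _ => hc0 i j
  -- geometric sum bound
  have geom_bound : ∀ i j, β i j ≠ 1 → ∀ N,
      ‖∑ n ∈ Finset.range N, (β i j) ^ n‖ ≤ c i j := by
    intro i j hne N
    rw [geom_sum_eq hne N, norm_div, hcdef]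
    have h1 : ‖(β i j) ^ N - 1‖ ≤ 2 := by
      calc ‖(β i j) ^ N - 1‖ ≤ ‖(β i j) ^ N‖ + ‖(1 : ℂ)‖ :=
            norm_sub_le _ _
        _ = 2 := by rw [norm_pow, hβabs, one_pow, norm_one]; norm_num
    have h2 : 0 < ‖β i j - 1‖ := by
      rw [norm_pos_iff]; exact sub_ne_zero_of_ne hne
    exact div_le_div_of_nonneg_right h1 h2.le |>.trans_eq rfl
  -- key identity
  have key : ∀ N, ∑ n ∈ Finset.range N, (S n) ^ 2 =
      ∑ i, ∑ j, (∑ n ∈ Finset.range N, (β i j) ^ n).re := by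
    intro N
    have hterm : ∀ n, (S n) ^ 2 = ∑ i, ∑ j, ((β i j) ^ n).re := by
      intro n
      have hz : (∑ i, α i ^ n) * starRingEnd ℂ (∑ j, α j ^ n)
          = ∑ i, ∑ j, (β i j) ^ n := by
        rw [map_sum, Finset.sum_mul_sum]
        refine Finset.sum_congr rfl fun i _ => Finset.sum_congr rfl fun j _ => ?_
        rw [hβdef, mul_pow, map_pow]
      have : ((∑ i, α i ^ n) * starRingEnd ℂ (∑ j, α j ^ n)).re
          = (S n) ^ 2 := by
        rw [Complex.mul_conj, Complex.ofReal_re, hSdef, ← Complex.sq_norm]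
      rw [← this, hz, Complex.re_sum]
      exact Finset.sum_congr rfl fun i _ => Complex.re_sum _ _
    calc ∑ n ∈ Finset.range N, (S n) ^ 2
        = ∑ n ∈ Finset.range N, ∑ i, ∑ j, ((β i j) ^ n).re :=
          Finset.sum_congr rfl fun n _ => hterm n
      _ = ∑ i, ∑ n ∈ Finset.range N, ∑ j, ((β i j) ^ n).re := Finset.sum_comm
      _ = ∑ i, ∑ j, ∑ n ∈ Finset.range N, ((β i j) ^ n).re :=
          Finset.sum_congr rfl fun i _ => Finset.sum_comm
      _ = ∑ i, ∑ j, (∑ n ∈ Finset.range N, (β i j) ^ n).re :=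
          Finset.sum_congr rfl fun i _ => Finset.sum_congr rfl fun j _ =>
            (Complex.re_sum _ _).symm
  -- lower bound
  have lower : ∀ N, (m : ℝ) * N - C ≤ ∑ n ∈ Finset.range N, (S n) ^ 2 := by
    intro N
    rw [key N]
    have hterm : ∀ i j, (if i = j then (N : ℝ) else 0) - c i j
        ≤ (∑ n ∈ Finset.range N, (β i j) ^ n).re := by
      intro i j
      by_cases hij : i = j
      · subst hij
        rw [hcdiag, if_pos rfl, sub_zero, hβdiag]
        simp
      · rw [if_neg hij, zero_sub]
        by_cases hne : β i j = 1
        · rw [hne]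
          simp only [one_pow, Finset.sum_const, Finset.card_range, nsmul_eq_mul, mul_one]
          calc -(c i j) ≤ 0 := neg_nonpos_of_nonneg (hc0 i j)
            _ ≤ ((N : ℂ)).re := by simp
        · calc -(c i j) ≤ -(‖∑ n ∈ Finset.range N, (β i j) ^ n‖) :=
                neg_le_neg (geom_bound i j hne N)
            _ ≤ (∑ n ∈ Finset.range N, (β i j) ^ n).re := by
                have := Complex.abs_re_le_norm (∑ n ∈ Finset.range N, (β i j) ^ n)
                cases abs_le.mp this with
                | intro h1 h2 => exact h1
    have hsum1 : ∑ i, ∑ j, ((if i = j then (N : ℝ) else 0) - c i j)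
        = (∑ i : Fin m, ∑ j : Fin m, (if i = j then (N : ℝ) else 0)) - C := by
      rw [hCdef, ← Finset.sum_sub_distrib]
      exact Finset.sum_congr rfl fun i _ => Finset.sum_sub_distrib _ _
    have hsum2 : (∑ i : Fin m, ∑ j : Fin m, (if i = j then (N : ℝ) else 0)) = (m : ℝ) * N := by
      simp [Finset.sum_ite_eq, Finset.card_univ, mul_comm]
    calc (m : ℝ) * N - C
        = ∑ i, ∑ j, ((if i = j then (N : ℝ) else 0) - c i j) := by
          rw [hsum1, hsum2]
      _ ≤ ∑ i, ∑ j, (∑ n ∈ Finset.range N, (β i j) ^ n).re :=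
          Finset.sum_le_sum fun i _ => Finset.sum_le_sum fun j _ => hterm i j
  -- every eventual upper bound a satisfies √m ≤ a
  have step2 : ∀ a : ℝ, (∀ᶠ n in Filter.atTop, S n ≤ a) → Real.sqrt m ≤ a := by
    intro a ha
    obtain ⟨N₀, hN₀⟩ := Filter.eventually_atTop.mp ha
    have ha0 : 0 ≤ a := le_trans (hS0 N₀) (hN₀ N₀ le_rfl)
    have hma : (m : ℝ) ≤ a ^ 2 := by
      by_contra hcon
      push_neg at hcon
      have hpos : 0 < (m : ℝ) - a ^ 2 := by linarith
      obtain ⟨K, hK⟩ := exists_nat_gt ((C + N₀ * m ^ 2) / ((m : ℝ) - a ^ 2))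
      set N := max N₀ K with hNdef
      have hNK : (K : ℝ) ≤ N := by exact_mod_cast Nat.cast_le.mpr (le_max_right _ _)
      have hbig : C + N₀ * (m : ℝ) ^ 2 < ((m : ℝ) - a ^ 2) * N := by
        rw [div_lt_iff₀ hpos] at hK
        calc C + N₀ * (m : ℝ) ^ 2 < K * ((m : ℝ) - a ^ 2) := hK
          _ ≤ N * ((m : ℝ) - a ^ 2) := by
              exact mul_le_mul_of_nonneg_right hNK (le_of_lt hpos)
          _ = ((m : ℝ) - a ^ 2) * N := mul_comm _ _
      -- upper bound for sum
      have hupper : ∑ n ∈ Finset.range N, (S n) ^ 2 ≤ N₀ * m ^ 2 + N * a ^ 2 := by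
        have hsplit : ∑ n ∈ Finset.range N, (S n) ^ 2
            = ∑ n ∈ Finset.range N₀, (S n) ^ 2 + ∑ n ∈ Finset.Ico N₀ N, (S n) ^ 2 := by
          rw [Finset.range_eq_Ico, Finset.range_eq_Ico]
          exact (Finset.sum_Ico_consecutive _ (Nat.zero_le _) (le_max_left _ _)).symm
        rw [hsplit]
        have h1 : ∑ n ∈ Finset.range N₀, (S n) ^ 2 ≤ N₀ * m ^ 2 := by
          calc ∑ n ∈ Finset.range N₀, (S n) ^ 2 ≤ ∑ _n ∈ Finset.range N₀, (m : ℝ) ^ 2 :=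
                Finset.sum_le_sum fun n _ => pow_le_pow_left₀ (hS0 n) (hSm n) 2
            _ = N₀ * m ^ 2 := by rw [Finset.sum_const, Finset.card_range, nsmul_eq_mul]
        have h2 : ∑ n ∈ Finset.Ico N₀ N, (S n) ^ 2 ≤ N * a ^ 2 := by
          calc ∑ n ∈ Finset.Ico N₀ N, (S n) ^ 2 ≤ ∑ _n ∈ Finset.Ico N₀ N, a ^ 2 :=
                Finset.sum_le_sum fun n hn =>
                  pow_le_pow_left₀ (hS0 n) (hN₀ n (Finset.mem_Ico.mp hn).1) 2
            _ = (N - N₀ : ℕ) * a ^ 2 := by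
                rw [Finset.sum_const, Nat.card_Ico, nsmul_eq_mul]
            _ ≤ N * a ^ 2 := by
                apply mul_le_mul_of_nonneg_right _ (sq_nonneg a)
                exact_mod_cast Nat.cast_le.mpr (Nat.sub_le _ _)
        linarith
      have := lower N
      nlinarith
    calc Real.sqrt m ≤ Real.sqrt (a ^ 2) := Real.sqrt_le_sqrt hma
      _ = a := Real.sqrt_sq ha0
  -- conclude
  rw [Filter.limsup_eq]
  apply le_csInf
  · exact ⟨m, Filter.Eventually.of_forall hSm⟩
  · intro b hb
    exact step2 b hb
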